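/- Let F ∈ C^2([T_0,∞)) satisfy F(t) ≥ c_0 (1+t)^r and F''(t) ≥ c_1 (1+t)^{-q} |F(t)|^p for t ≥ T_0, with constants c_0, c_1 > 0, p > 1, r ≥ 1, and (p-1)r > q - 2. Then F cannot exist on all of [T_0,∞); i.e., there is T < ∞ with lim_{t→T^-} F(t) = ∞ (Kato's lemma). -/

import Mathlib

open Set Real

private lemma diffs_of_contDiffAt_two {F : ℝ → ℝ} {t : ℝ} (h : ContDiffAt ℝ 2 F t) :
    DifferentiableAt ℝ F t ∧ DifferentiableAt ℝ (deriv F) t := by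
  refine ⟨h.differentiableAt (by norm_num), ?_⟩
  obtain ⟨u, hu, hFu⟩ := h.contDiffOn (le_refl 2) (by simp)
  obtain ⟨v, hvu, hv, hxv⟩ := mem_nhds_iff.1 hu
  have h2 : ContDiffOn ℝ (1 + 1) F v := by exact_mod_cast hFu.mono hvu
  have h3 := (contDiffOn_succ_iff_deriv_of_isOpen hv).1 h2
  exact (h3.2.2.differentiableOn (by norm_num)).differentiableAt (hv.mem_nhds hxv)

private lemma le_of_deriv_nonneg_Icc' {f : ℝ → ℝ} {a b : ℝ} (hab : a ≤ b)
    (hd : ∀ t ∈ Set.Icc a b, DifferentiableAt ℝ f t)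
    (h' : ∀ t ∈ Set.Ioo a b, 0 ≤ deriv f t) : f a ≤ f b := by
  have hm := monotoneOn_of_deriv_nonneg (convex_Icc a b)
    (fun t ht => (hd t ht).continuousAt.continuousWithinAt)
    (fun t ht => (hd t (interior_subset ht)).differentiableWithinAt)
    (fun t ht => h' t (by rwa [interior_Icc] at ht))
  exact hm (left_mem_Icc.2 hab) (right_mem_Icc.2 hab) hab

private lemma le_of_deriv_nonpos_Icc' {f : ℝ → ℝ} {a b : ℝ} (hab : a ≤ b)
    (hd : ∀ t ∈ Set.Icc a b, DifferentiableAt ℝ f t)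
    (h' : ∀ t ∈ Set.Ioo a b, deriv f t ≤ 0) : f b ≤ f a := by
  have hm := antitoneOn_of_deriv_nonpos (convex_Icc a b)
    (fun t ht => (hd t ht).continuousAt.continuousWithinAt)
    (fun t ht => (hd t (interior_subset ht)).differentiableWithinAt)
    (fun t ht => h' t (by rwa [interior_Icc] at ht))
  exact hm (left_mem_Icc.2 hab) (right_mem_Icc.2 hab) hab

private lemma one_le_mul_rpow {K x e : ℝ} (hK : 0 < K) (he : 0 < e)
    (hx0 : 0 ≤ x) (hx : (1 / K) ^ e⁻¹ ≤ x) : 1 ≤ K * x ^ e := by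
  have h0 : (0:ℝ) ≤ 1 / K := by positivity
  have h1 : ((1 / K) ^ e⁻¹) ^ e ≤ x ^ e := Real.rpow_le_rpow (Real.rpow_nonneg h0 _) hx he.le
  rw [← Real.rpow_mul h0, inv_mul_cancel₀ he.ne', Real.rpow_one] at h1
  rw [div_le_iff₀ hK] at h1
  linarith

private lemma window_bound {c₁ q T t : ℝ} (hc₁ : 0 < c₁) (hT : 1 ≤ T)
    (ht : t ∈ Set.Icc T (2 * T)) :
    c₁ * 3 ^ (-|q|) * (1 + T) ^ (-q) ≤ c₁ * (1 + t) ^ (-q) := by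
  have hxT : (0:ℝ) < 1 + T := by linarith
  have hxt : (0:ℝ) < 1 + t := by nlinarith [ht.1]
  rcases le_or_gt 0 q with hq | hq
  · have h1 : 1 + t ≤ 3 * (1 + T) := by nlinarith [ht.2]
    have h2 : (1 + t) ^ q ≤ (3 * (1 + T)) ^ q := Real.rpow_le_rpow hxt.le h1 hq
    rw [Real.mul_rpow (by norm_num) hxT.le] at h2
    rw [abs_of_nonneg hq, Real.rpow_neg hxt.le, Real.rpow_neg hxT.le,
      Real.rpow_neg (by norm_num : (0:ℝ) ≤ 3), mul_assoc, ← mul_inv]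
    have h3 : 0 < (1 + t) ^ q := Real.rpow_pos_of_pos hxt q
    gcongr
  · have h1 : (1 + T) ^ (-q) ≤ (1 + t) ^ (-q) :=
      Real.rpow_le_rpow hxT.le (by linarith [ht.1]) (by linarith)
    have h2 : (3:ℝ) ^ (-|q|) ≤ 1 :=
      Real.rpow_le_one_of_one_le_of_nonpos (by norm_num) (neg_nonpos.2 (abs_nonneg q))
    have h3 : 0 < (1 + T) ^ (-q) := Real.rpow_pos_of_pos hxT _
    have h4 : 0 < (3:ℝ) ^ (-|q|) := Real.rpow_pos_of_pos (by norm_num) _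
    nlinarith [mul_le_mul_of_nonneg_left h1 hc₁.le,
      mul_le_mul_of_nonneg_right (mul_le_mul_of_nonneg_left h2 hc₁.le) h3.le]

set_option maxHeartbeats 3000000 in
/-- Kato's lemma: there is no `F ∈ C²([T₀,∞))` satisfying
`F(t) ≥ c₀ (1+t)^r` and `F''(t) ≥ c₁ (1+t)^{-q} |F(t)|^p` for all `t ≥ T₀`,
when `c₀, c₁ > 0`, `p > 1`, `r ≥ 1` and `(p-1)r > q-2`; i.e. such differential
inequalities force blow-up in finite time. -/
theorem kato_blowup (T₀ c₀ c₁ p r q : ℝ) (F : ℝ → ℝ)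
    (hT₀ : 0 ≤ T₀) (hc₀ : 0 < c₀) (hc₁ : 0 < c₁) (hp : 1 < p) (hr : 1 ≤ r)
    (hpq : q - 2 < (p - 1) * r)
    (hF : ∀ t : ℝ, T₀ ≤ t → ContDiffAt ℝ 2 F t)
    (hlow : ∀ t : ℝ, T₀ ≤ t → c₀ * (1 + t) ^ r ≤ F t)
    (hineq : ∀ t : ℝ, T₀ ≤ t → c₁ * (1 + t) ^ (-q) * |F t| ^ p ≤ deriv (deriv F) t) :
    False := by
  have hp0 : (0:ℝ) < p - 1 := by linarith
  -- basic positivity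
  have hFpos : ∀ t, T₀ ≤ t → 0 < F t := by
    intro t ht
    have h1t : (0:ℝ) < 1 + t := by linarith [hT₀.trans ht]
    calc (0:ℝ) < c₀ * (1 + t) ^ r := by positivity
    _ ≤ F t := hlow t ht
  have hF2pos : ∀ t, T₀ ≤ t → 0 < deriv (deriv F) t := by
    intro t ht
    have h1t : (0:ℝ) < 1 + t := by linarith [hT₀.trans ht]
    have h2 : 0 < |F t| := abs_pos.2 (hFpos t ht).ne'
    calc (0:ℝ) < c₁ * (1 + t) ^ (-q) * |F t| ^ p := by positivity
    _ ≤ _ := hineq t ht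
  have hdF : ∀ t, T₀ ≤ t → DifferentiableAt ℝ F t :=
    fun t ht => (diffs_of_contDiffAt_two (hF t ht)).1
  have hdF' : ∀ t, T₀ ≤ t → DifferentiableAt ℝ (deriv F) t :=
    fun t ht => (diffs_of_contDiffAt_two (hF t ht)).2
  -- deriv F is monotone
  have hderivF_mono : ∀ a b, T₀ ≤ a → a ≤ b → deriv F a ≤ deriv F b := by
    intro a b ha hab
    exact le_of_deriv_nonneg_Icc' hab (fun t ht => hdF' t (ha.trans ht.1))
      (fun t ht => (hF2pos t (ha.trans ht.1.le)).le)
  -- linear lower bound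
  have hlin : ∀ t, T₀ ≤ t → c₀ * (1 + t) ≤ F t := by
    intro t ht
    have h0t : (0:ℝ) ≤ t := hT₀.trans ht
    have h1 : (1:ℝ) ≤ 1 + t := by linarith
    have h2 := Real.rpow_le_rpow_of_exponent_le h1 hr
    rw [Real.rpow_one] at h2
    have h3 := mul_le_mul_of_nonneg_left h2 hc₀.le
    calc c₀ * (1 + t) ≤ c₀ * (1 + t) ^ r := by linarith only [h3]
    _ ≤ F t := hlow t ht
  -- a point where deriv F is positive
  obtain ⟨T₁, hT₁0, hT₁pos⟩ : ∃ T₁, T₀ ≤ T₁ ∧ 0 < deriv F T₁ := by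
    by_contra hcon
    push_neg at hcon
    set u := max T₀ (F T₀ / c₀) with hu
    have huT₀ : T₀ ≤ u := le_max_left _ _
    have h1 : F u ≤ F T₀ := le_of_deriv_nonpos_Icc' huT₀
      (fun t ht => hdF t ht.1) (fun t ht => hcon t ht.1.le)
    have h2 : c₀ * (1 + u) ≤ F u := hlin u huT₀
    have h3 : F T₀ / c₀ ≤ u := le_max_right _ _
    have h4 : F T₀ ≤ c₀ * u := by
      rw [div_le_iff₀ hc₀] at h3; linarith
    linarith only [h1, h2, h4, hc₀]
  have hF'pos : ∀ t, T₁ ≤ t → 0 < deriv F t :=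
    fun t ht => lt_of_lt_of_le hT₁pos (hderivF_mono T₁ t hT₁0 ht)
  have hFmono : ∀ a b, T₁ ≤ a → a ≤ b → F a ≤ F b := by
    intro a b ha hab
    exact le_of_deriv_nonneg_Icc' hab (fun t ht => hdF t (hT₁0.trans (ha.trans ht.1)))
      (fun t ht => (hF'pos t (ha.trans ht.1.le)).le)
  -- constants (introduced as opaque variables to keep defeq cheap)
  obtain ⟨e, he_def⟩ : ∃ e : ℝ, e = r * (p - 1) - q + 2 := ⟨_, rfl⟩
  have he : 0 < e := by
    rw [he_def]
    have hcomm : r * (p - 1) = (p - 1) * r := mul_comm _ _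
    linarith only [hpq, hcomm.le, hcomm.ge]
  obtain ⟨c₂, hc₂_def⟩ : ∃ c₂ : ℝ, c₂ = c₁ * 3 ^ (-|q|) := ⟨_, rfl⟩
  have hc₂ : 0 < c₂ := by
    rw [hc₂_def]
    have : (0:ℝ) < 3 ^ (-|q|) := Real.rpow_pos_of_pos (by norm_num) _
    positivity
  have hcp : (0:ℝ) < c₀ ^ (p - 1) := Real.rpow_pos_of_pos hc₀ _
  obtain ⟨K₁, hK₁_def⟩ : ∃ K₁ : ℝ, K₁ = c₂ * c₀ ^ (p - 1) / 128 := ⟨_, rfl⟩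
  have hK₁ : 0 < K₁ := by rw [hK₁_def]; positivity
  obtain ⟨K₂, hK₂_def⟩ : ∃ K₂ : ℝ, K₂ = 9 * (p - 1) ^ 2 * c₂ * c₀ ^ (p - 1) / (256 * (p + 1)) :=
    ⟨_, rfl⟩
  have hK₂ : 0 < K₂ := by
    rw [hK₂_def]
    have : (0:ℝ) < p + 1 := by linarith
    positivity
  -- choose the window start T
  obtain ⟨T, hT₁T, hT1, hxA₁, hxA₂⟩ :
      ∃ T : ℝ, T₁ ≤ T ∧ 1 ≤ T ∧ (1 / K₁) ^ e⁻¹ ≤ 1 + T ∧ (1 / K₂) ^ e⁻¹ ≤ 1 + T := by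
    refine ⟨max T₁ (max 1 (max ((1 / K₁) ^ e⁻¹) ((1 / K₂) ^ e⁻¹))), le_max_left _ _,
      le_trans (le_max_left _ _) (le_max_right _ _), ?_, ?_⟩
    · have : (1 / K₁) ^ e⁻¹ ≤ max T₁ (max 1 (max ((1 / K₁) ^ e⁻¹) ((1 / K₂) ^ e⁻¹))) :=
        le_trans (le_trans (le_max_left _ _) (le_max_right _ _)) (le_max_right _ _)
      linarith
    · have : (1 / K₂) ^ e⁻¹ ≤ max T₁ (max 1 (max ((1 / K₁) ^ e⁻¹) ((1 / K₂) ^ e⁻¹))) :=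
        le_trans (le_trans (le_max_right _ _) (le_max_right _ _)) (le_max_right _ _)
      linarith
  have hT₀T : T₀ ≤ T := hT₁0.trans hT₁T
  obtain ⟨x, hx_def⟩ : ∃ x : ℝ, x = 1 + T := ⟨_, rfl⟩
  have hx0 : (0:ℝ) < x := by rw [hx_def]; linarith
  have hx2T : x ≤ 2 * T := by rw [hx_def]; linarith
  have hK₁x : 1 ≤ K₁ * x ^ e := one_le_mul_rpow hK₁ he hx0.le (hx_def ▸ hxA₁)
  have hK₂x : 1 ≤ K₂ * x ^ e := one_le_mul_rpow hK₂ he hx0.le (hx_def ▸ hxA₂)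
  -- the coefficient on the window
  obtain ⟨m, hm_def⟩ : ∃ m : ℝ, m = c₂ * x ^ (-q) := ⟨_, rfl⟩
  have hm : 0 < m := by
    rw [hm_def]
    have : (0:ℝ) < x ^ (-q) := Real.rpow_pos_of_pos hx0 _
    positivity
  have hT₀mem : ∀ t, t ∈ Set.Icc T (2 * T) → T₀ ≤ t := fun t ht => hT₀T.trans ht.1
  have hT₁mem : ∀ t, t ∈ Set.Icc T (2 * T) → T₁ ≤ t := fun t ht => hT₁T.trans ht.1
  have hFpp : ∀ t ∈ Set.Icc T (2 * T), m * F t ^ p ≤ deriv (deriv F) t := by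
    intro t ht
    have h1 := hineq t (hT₀mem t ht)
    rw [abs_of_pos (hFpos t (hT₀mem t ht))] at h1
    have h3 := window_bound (q := q) hc₁ hT1 ht
    have h4 : 0 ≤ F t ^ p := Real.rpow_nonneg (hFpos t (hT₀mem t ht)).le _
    rw [hm_def, hc₂_def, hx_def]
    calc c₁ * 3 ^ (-|q|) * (1 + T) ^ (-q) * F t ^ p ≤ c₁ * (1 + t) ^ (-q) * F t ^ p :=
          mul_le_mul_of_nonneg_right h3 h4
    _ ≤ _ := h1
  -- Phase A : doubling
  obtain ⟨S, hS_def⟩ : ∃ S : ℝ, S = T + T / 4 := ⟨_, rfl⟩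
  have hTS : T ≤ S := by rw [hS_def]; linarith
  have hS2T : S ≤ 2 * T := by rw [hS_def]; linarith
  obtain ⟨P, hP_def⟩ : ∃ P : ℝ, P = m * F T ^ p := ⟨_, rfl⟩
  have hFT : 0 < F T := hFpos T hT₀T
  have hFTp : 0 < F T ^ p := Real.rpow_pos_of_pos hFT _
  have hP : 0 < P := by rw [hP_def]; positivity
  have hpsi : ∀ t ∈ Set.Ioo T (2 * T), 0 ≤ deriv F t - P * (t - T) := by
    intro t ht
    have h1 : deriv F T - P * (T - T) ≤ deriv F t - P * (t - T) := by
      apply le_of_deriv_nonneg_Icc' (f := fun s => deriv F s - P * (s - T)) ht.1.le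
      · intro s hs
        have hsT₀ : T₀ ≤ s := hT₀T.trans hs.1
        exact (hdF' s hsT₀).sub ((differentiableAt_id.sub_const T).const_mul P)
      · intro s hs
        have hsmem : s ∈ Set.Icc T (2 * T) := ⟨hs.1.le, hs.2.le.trans ht.2.le⟩
        have hD : HasDerivAt (fun s => deriv F s - P * (s - T))
            (deriv (deriv F) s - P * 1) s :=
          ((hdF' s (hT₀mem s hsmem)).hasDerivAt).sub
            (((hasDerivAt_id s).sub_const T).const_mul P)
        rw [hD.deriv]
        have h2 := hFpp s hsmem
        have h4 : F T ^ p ≤ F s ^ p :=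
          Real.rpow_le_rpow hFT.le (hFmono T s hT₁T hs.1.le) (by linarith)
        have h5 : m * F T ^ p ≤ m * F s ^ p := mul_le_mul_of_nonneg_left h4 hm.le
        rw [hP_def, mul_one]
        linarith
    have h0 := hF'pos T hT₁T
    linarith only [h0, h1]
  have hA : F T + P / 2 * (T / 4) ^ 2 ≤ F S := by
    have h1 : F T - P / 2 * (T - T) ^ 2 ≤ F S - P / 2 * (S - T) ^ 2 := by
      apply le_of_deriv_nonneg_Icc' (f := fun s => F s - P / 2 * (s - T) ^ 2) hTS
      · intro s hs
        exact (hdF s (hT₀T.trans hs.1)).sub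
          (((differentiableAt_id.sub_const T).pow 2).const_mul (P / 2))
      · intro s hs
        have hD : HasDerivAt (fun s => F s - P / 2 * (s - T) ^ 2)
            (deriv F s - P / 2 * (2 * (s - T) ^ (2 - 1) * 1)) s :=
          ((hdF s (hT₀T.trans hs.1.le)).hasDerivAt).sub
            ((((hasDerivAt_id s).sub_const T).pow 2).const_mul (P / 2))
        rw [hD.deriv]
        have h2 := hpsi s ⟨hs.1, lt_of_lt_of_le hs.2 hS2T⟩
        norm_num
        linarith only [h2]
    have h2 : S - T = T / 4 := by rw [hS_def]; ring
    rw [h2] at h1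
    linarith only [h1]
  have hQ : 1 ≤ m * F T ^ (p - 1) * T ^ 2 / 32 := by
    have e1 : c₀ ^ (p - 1) * x ^ (r * (p - 1)) ≤ F T ^ (p - 1) := by
      have hr0 : (0:ℝ) ≤ x ^ r := Real.rpow_nonneg hx0.le r
      have h0 : (c₀ * x ^ r) ^ (p - 1) ≤ F T ^ (p - 1) :=
        Real.rpow_le_rpow (by positivity) (by rw [hx_def]; exact hlow T hT₀T) hp0.le
      rwa [Real.mul_rpow hc₀.le hr0, ← Real.rpow_mul hx0.le] at h0
    have e2 : x ^ (2:ℝ) ≤ 4 * T ^ 2 := by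
      have h2 : x ^ (2:ℝ) = x ^ (2:ℕ) := by
        rw [← Real.rpow_natCast x 2]; norm_num
      rw [h2]; nlinarith only [hx2T, hx0]
    have e3 : x ^ e = x ^ (-q) * x ^ (r * (p - 1)) * x ^ (2:ℝ) := by
      rw [← Real.rpow_add hx0, ← Real.rpow_add hx0]
      congr 1; rw [he_def]; ring
    have hxq : (0:ℝ) ≤ x ^ (-q) := (Real.rpow_pos_of_pos hx0 _).le
    have hxrp : (0:ℝ) ≤ x ^ (r * (p - 1)) := (Real.rpow_pos_of_pos hx0 _).le
    calc (1:ℝ) ≤ K₁ * x ^ e := hK₁x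
    _ = c₂ * x ^ (-q) * (c₀ ^ (p - 1) * x ^ (r * (p - 1))) * x ^ (2:ℝ) / 128 := by
        rw [e3, hK₁_def]; ring
    _ ≤ c₂ * x ^ (-q) * (F T ^ (p - 1)) * (4 * T ^ 2) / 128 := by
        have hnn : (0:ℝ) ≤ c₂ * x ^ (-q) := by positivity
        have hnn2 : (0:ℝ) ≤ c₀ ^ (p - 1) * x ^ (r * (p - 1)) := by positivity
        gcongr
    _ = m * F T ^ (p - 1) * T ^ 2 / 32 := by rw [hm_def]; ring
  have hdouble : 2 * F T ≤ F S := by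
    have hsplit : F T ^ p = F T ^ (p - 1) * F T := by
      have h := Real.rpow_add_one hFT.ne' (p - 1)
      rwa [sub_add_cancel] at h
    have h1 : F T * 1 ≤ F T * (m * F T ^ (p - 1) * T ^ 2 / 32) :=
      mul_le_mul_of_nonneg_left hQ hFT.le
    have h2 : F T ≤ P / 2 * (T / 4) ^ 2 := by
      calc F T = F T * 1 := (mul_one _).symm
      _ ≤ F T * (m * F T ^ (p - 1) * T ^ 2 / 32) := h1
      _ = P / 2 * (T / 4) ^ 2 := by rw [hP_def, hsplit]; ring
    linarith [hA]
  -- Phase B : energy estimate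
  have hpm : (0:ℝ) < p + 1 := by linarith
  obtain ⟨γ, hγ_def⟩ : ∃ γ : ℝ, γ = m / (p + 1) := ⟨_, rfl⟩
  have hγ : 0 < γ := by rw [hγ_def]; positivity
  have hγm : γ * (p + 1) = m := by rw [hγ_def]; field_simp
  have hgrad : ∀ t ∈ Set.Icc S (2 * T),
      Real.sqrt γ * F t ^ ((p + 1) / 2) ≤ deriv F t := by
    intro t ht
    have htmem : t ∈ Set.Icc T (2 * T) := ⟨hTS.trans ht.1, ht.2⟩
    have hFt : 0 < F t := hFpos t (hT₀mem t htmem)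
    have hE : (deriv F T) ^ 2 - 2 * γ * F T ^ (p + 1)
        ≤ (deriv F t) ^ 2 - 2 * γ * F t ^ (p + 1) := by
      apply le_of_deriv_nonneg_Icc'
        (f := fun u => (deriv F u) ^ 2 - 2 * γ * F u ^ (p + 1)) htmem.1
      · intro u hu
        have huT₀ : T₀ ≤ u := hT₀T.trans hu.1
        exact ((hdF' u huT₀).pow 2).sub
          (((hdF u huT₀).rpow_const (Or.inl (hFpos u huT₀).ne')).const_mul (2 * γ))
      · intro u hu
        have humem : u ∈ Set.Icc T (2 * T) := ⟨hu.1.le, hu.2.le.trans htmem.2⟩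
        have huT₀ : T₀ ≤ u := hT₀mem u humem
        have hFu : 0 < F u := hFpos u huT₀
        have hD : HasDerivAt (fun u => (deriv F u) ^ 2 - 2 * γ * F u ^ (p + 1))
            (2 * deriv F u ^ (2 - 1) * deriv (deriv F) u
              - 2 * γ * (deriv F u * (p + 1) * F u ^ (p + 1 - 1))) u :=
          (((hdF' u huT₀).hasDerivAt).pow 2).sub
            ((((hdF u huT₀).hasDerivAt).rpow_const (Or.inl hFu.ne')).const_mul (2 * γ))
        rw [hD.deriv]
        have h2 := hFpp u humem
        have h3 : 0 ≤ deriv F u := (hF'pos u (hT₁mem u humem)).le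
        have h4 : p + 1 - 1 = p := by ring
        rw [h4]
        have h2' : γ * (p + 1) * F u ^ p ≤ deriv (deriv F) u := by rw [hγm]; exact h2
        have h6 : 0 ≤ deriv F u * (deriv (deriv F) u - γ * (p + 1) * F u ^ p) :=
          mul_nonneg h3 (by linarith only [h2'])
        norm_num
        linarith only [h6]
    have hFTle : F T ≤ F t / 2 := by
      have := hFmono S t (hT₁T.trans hTS) ht.1
      linarith [hdouble]
    have h7 : F T ^ (p + 1) ≤ F t ^ (p + 1) / 2 := by
      have h8 : F T ^ (p + 1) ≤ (F t / 2) ^ (p + 1) :=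
        Real.rpow_le_rpow hFT.le hFTle (by linarith)
      have h9 : (F t / 2) ^ (p + 1) = F t ^ (p + 1) / 2 ^ (p + 1) :=
        Real.div_rpow hFt.le (by norm_num) _
      have h10 : (2:ℝ) ≤ 2 ^ (p + 1) := by
        calc (2:ℝ) = 2 ^ (1:ℝ) := (Real.rpow_one 2).symm
        _ ≤ 2 ^ (p + 1) := Real.rpow_le_rpow_of_exponent_le one_le_two (by linarith)
      have h12 : F t ^ (p + 1) / 2 ^ (p + 1) ≤ F t ^ (p + 1) / 2 := by
        have hnum : (0:ℝ) ≤ F t ^ (p + 1) := Real.rpow_nonneg hFt.le _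
        gcongr
      calc F T ^ (p + 1) ≤ (F t / 2) ^ (p + 1) := h8
      _ = F t ^ (p + 1) / 2 ^ (p + 1) := h9
      _ ≤ F t ^ (p + 1) / 2 := h12
    have h13 : γ * F t ^ (p + 1) ≤ (deriv F t) ^ 2 := by
      have h15 : 2 * γ * F T ^ (p + 1) ≤ 2 * γ * (F t ^ (p + 1) / 2) :=
        mul_le_mul_of_nonneg_left h7 (by positivity)
      rw [show 2 * γ * (F t ^ (p + 1) / 2) = γ * F t ^ (p + 1) from by ring] at h15
      linarith only [hE, h15, sq_nonneg (deriv F T)]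
    have h16 : 0 ≤ deriv F t := (hF'pos t (hT₁mem t htmem)).le
    have h17 : Real.sqrt (γ * F t ^ (p + 1)) ≤ deriv F t := by
      have h18 := Real.sqrt_le_sqrt h13
      rwa [Real.sqrt_sq h16] at h18
    have h19 : Real.sqrt (γ * F t ^ (p + 1))
        = Real.sqrt γ * F t ^ ((p + 1) / 2) := by
      rw [Real.sqrt_mul hγ.le]
      congr 1
      rw [Real.sqrt_eq_rpow, ← Real.rpow_mul hFt.le]
      congr 1
      ring
    rw [← h19]
    exact h17
  -- Phase C : Riccati comparison
  obtain ⟨β, hβ_def⟩ : ∃ β : ℝ, β = Real.sqrt γ * ((p - 1) / 2) := ⟨_, rfl⟩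
  have hβ : 0 < β := by
    rw [hβ_def]
    have h0 : 0 < Real.sqrt γ := Real.sqrt_pos.2 hγ
    positivity
  have hC : F (2 * T) ^ (-(p - 1) / 2) + β * (2 * T) ≤ F S ^ (-(p - 1) / 2) + β * S := by
    apply le_of_deriv_nonpos_Icc' (f := fun u => F u ^ (-(p - 1) / 2) + β * u) hS2T
    · intro u hu
      have huT₀ : T₀ ≤ u := hT₀T.trans (hTS.trans hu.1)
      exact ((hdF u huT₀).rpow_const (Or.inl (hFpos u huT₀).ne')).add
        (differentiableAt_id.const_mul β)
    · intro u hu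
      have humem : u ∈ Set.Icc S (2 * T) := ⟨hu.1.le, hu.2.le⟩
      have huT₀ : T₀ ≤ u := hT₀T.trans (hTS.trans humem.1)
      have hFu : 0 < F u := hFpos u huT₀
      have hD : HasDerivAt (fun u => F u ^ (-(p - 1) / 2) + β * u)
          (deriv F u * (-(p - 1) / 2) * F u ^ (-(p - 1) / 2 - 1) + β * 1) u :=
        (((hdF u huT₀).hasDerivAt).rpow_const (Or.inl hFu.ne')).add
          ((hasDerivAt_id u).const_mul β)
      rw [hD.deriv]
      have hg := hgrad u humem
      have hexp : -(p - 1) / 2 - 1 = -((p + 1) / 2) := by ring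
      rw [hexp]
      have h1 : F u ^ (-((p + 1) / 2)) * F u ^ ((p + 1) / 2) = 1 := by
        rw [← Real.rpow_add hFu]
        norm_num
      have h2 : 0 < F u ^ (-((p + 1) / 2)) := Real.rpow_pos_of_pos hFu _
      have h3 : F u ^ (-((p + 1) / 2)) * (Real.sqrt γ * F u ^ ((p + 1) / 2))
          ≤ F u ^ (-((p + 1) / 2)) * deriv F u := mul_le_mul_of_nonneg_left hg h2.le
      have h4 : F u ^ (-((p + 1) / 2)) * (Real.sqrt γ * F u ^ ((p + 1) / 2))
          = Real.sqrt γ := by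
        calc F u ^ (-((p + 1) / 2)) * (Real.sqrt γ * F u ^ ((p + 1) / 2))
            = Real.sqrt γ * (F u ^ (-((p + 1) / 2)) * F u ^ ((p + 1) / 2)) := by ring
        _ = Real.sqrt γ := by rw [h1, mul_one]
      have h5 : Real.sqrt γ ≤ F u ^ (-((p + 1) / 2)) * deriv F u := by
        rw [← h4]; exact h3
      rw [hβ_def]
      linarith only [mul_le_mul_of_nonneg_left h5 (by linarith : (0:ℝ) ≤ (p - 1) / 2)]
  -- final largeness and contradiction
  have hFS : 0 < F S := hFpos S (hT₀T.trans hTS)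
  have hSlow : c₀ * x ^ r ≤ F S := by
    have h1 : c₀ * x ^ r ≤ F T := by rw [hx_def]; exact hlow T hT₀T
    have h2 := hFmono T S hT₁T hTS
    linarith
  have hβ2 : β ^ 2 = γ * ((p - 1) / 2) ^ 2 := by
    rw [hβ_def, mul_pow, Real.sq_sqrt hγ.le]
  have hsq : F S ^ (-(p - 1)) ≤ β ^ 2 * (3 / 4 * T) ^ 2 := by
    have h1 : F S ^ (-(p - 1)) ≤ (c₀ * x ^ r) ^ (-(p - 1)) :=
      Real.rpow_le_rpow_of_nonpos (by positivity) hSlow (by linarith)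
    have h2 : (c₀ * x ^ r) ^ (-(p - 1)) = c₀ ^ (-(p - 1)) * x ^ (r * -(p - 1)) := by
      rw [Real.mul_rpow hc₀.le (Real.rpow_nonneg hx0.le r), ← Real.rpow_mul hx0.le]
    have hcneg : 0 < c₀ ^ (-(p - 1)) := Real.rpow_pos_of_pos hc₀ _
    have hxneg : 0 < x ^ (r * -(p - 1)) := Real.rpow_pos_of_pos hx0 _
    have h3 : c₀ ^ (-(p - 1)) * x ^ (r * -(p - 1))
        ≤ K₂ * x ^ e * (c₀ ^ (-(p - 1)) * x ^ (r * -(p - 1))) :=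
      le_mul_of_one_le_left (by positivity) hK₂x
    have h4 : K₂ * x ^ e * (c₀ ^ (-(p - 1)) * x ^ (r * -(p - 1)))
        = 9 * (p - 1) ^ 2 * c₂ / (256 * (p + 1)) * x ^ (2 - q) := by
      have hc' : c₀ ^ (p - 1) * c₀ ^ (-(p - 1)) = 1 := by
        rw [← Real.rpow_add hc₀, show p - 1 + -(p - 1) = 0 from by ring, Real.rpow_zero]
      have hx' : x ^ e * x ^ (r * -(p - 1)) = x ^ (2 - q) := by
        rw [← Real.rpow_add hx0]
        congr 1
        rw [he_def]; ring
      calc K₂ * x ^ e * (c₀ ^ (-(p - 1)) * x ^ (r * -(p - 1)))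
          = 9 * (p - 1) ^ 2 * c₂ / (256 * (p + 1)) * (c₀ ^ (p - 1) * c₀ ^ (-(p - 1)))
            * (x ^ e * x ^ (r * -(p - 1))) := by rw [hK₂_def]; ring
      _ = 9 * (p - 1) ^ 2 * c₂ / (256 * (p + 1)) * x ^ (2 - q) := by
          rw [hc', hx', mul_one]
    have h5 : 9 * (p - 1) ^ 2 * c₂ / (256 * (p + 1)) * x ^ (2 - q)
        ≤ β ^ 2 * (3 / 4 * T) ^ 2 := by
      have hx2 : x ^ (2 - q) = x ^ (2:ℝ) * x ^ (-q) := by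
        rw [← Real.rpow_add hx0, sub_eq_add_neg]
      have e2 : x ^ (2:ℝ) ≤ 4 * T ^ 2 := by
        have h2' : x ^ (2:ℝ) = x ^ (2:ℕ) := by
          rw [← Real.rpow_natCast x 2]; norm_num
        rw [h2']; nlinarith only [hx2T, hx0]
      rw [hx2]
      have hxq : 0 < x ^ (-q) := Real.rpow_pos_of_pos hx0 _
      have hcoef : 0 < 9 * (p - 1) ^ 2 * c₂ / (256 * (p + 1)) * x ^ (-q) := by positivity
      calc 9 * (p - 1) ^ 2 * c₂ / (256 * (p + 1)) * (x ^ (2:ℝ) * x ^ (-q))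
          = 9 * (p - 1) ^ 2 * c₂ / (256 * (p + 1)) * x ^ (-q) * x ^ (2:ℝ) := by ring
      _ ≤ 9 * (p - 1) ^ 2 * c₂ / (256 * (p + 1)) * x ^ (-q) * (4 * T ^ 2) :=
          mul_le_mul_of_nonneg_left e2 hcoef.le
      _ = β ^ 2 * (3 / 4 * T) ^ 2 := by
          rw [hβ2, hγ_def, hm_def]
          field_simp
          ring
    calc F S ^ (-(p - 1)) ≤ c₀ ^ (-(p - 1)) * x ^ (r * -(p - 1)) := by rw [← h2]; exact h1
    _ ≤ K₂ * x ^ e * (c₀ ^ (-(p - 1)) * x ^ (r * -(p - 1))) := h3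
    _ = 9 * (p - 1) ^ 2 * c₂ / (256 * (p + 1)) * x ^ (2 - q) := h4
    _ ≤ β ^ 2 * (3 / 4 * T) ^ 2 := h5
  have hfinal : F S ^ (-(p - 1) / 2) ≤ β * (3 / 4 * T) := by
    have h1 : F S ^ (-(p - 1) / 2) = Real.sqrt (F S ^ (-(p - 1))) := by
      rw [Real.sqrt_eq_rpow, ← Real.rpow_mul hFS.le]
      congr 1
      ring
    rw [h1]
    have h2 := Real.sqrt_le_sqrt hsq
    rwa [show β ^ 2 * (3 / 4 * T) ^ 2 = (β * (3 / 4 * T)) ^ 2 from by ring,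
      Real.sqrt_sq (by positivity)] at h2
  have hpos2T : 0 < F (2 * T) ^ (-(p - 1) / 2) :=
    Real.rpow_pos_of_pos (hFpos (2 * T) (by linarith)) _
  rw [hS_def] at hC hfinal
  linarith only [hC, hfinal, hpos2T]
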